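/- Every k-quasi-complete Hausdorff locally convex space over ℝ is Mackey-complete. -/

import Mathlib

open Filter Topology Set Bornology Pointwise

/-- A sequence in a locally convex space is *Mackey-Cauchy* if there are a bounded
absolutely convex set `B` and a double sequence of nonnegative reals `c` tending to `0`
such that `x n - x m ∈ c n m • B` for all `n, m`. -/
def MackeyCauchy (E : Type*) [AddCommGroup E] [Module ℝ E] [TopologicalSpace E]
    (x : ℕ → E) : Prop :=
  ∃ (B : Set E) (c : ℕ → ℕ → ℝ),
    IsVonNBounded ℝ B ∧ Convex ℝ B ∧ Balanced ℝ B ∧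
    (∀ n m, 0 ≤ c n m) ∧
    Tendsto (fun p : ℕ × ℕ => c p.1 p.2) atTop (𝓝 (0 : ℝ)) ∧
    ∀ n m, x n - x m ∈ c n m • B

/-- A locally convex space is *Mackey-complete* if every Mackey-Cauchy sequence converges. -/
def MackeyComplete (E : Type*) [AddCommGroup E] [Module ℝ E] [TopologicalSpace E] : Prop :=
  ∀ x : ℕ → E, MackeyCauchy E x → ∃ l : E, Tendsto x atTop (𝓝 l)

/-- A locally convex space is *k-quasi-complete* if the closed absolutely convex hull of
every compact set is compact. -/
def KQuasiComplete (E : Type*) [AddCommGroup E] [Module ℝ E] [TopologicalSpace E] : Prop :=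
  ∀ K : Set E, IsCompact K → IsCompact (closure (convexHull ℝ (balancedHull ℝ K)))

theorem mackeyComplete_of_kQuasiComplete'
    (E : Type*) [AddCommGroup E] [Module ℝ E] [TopologicalSpace E] [IsTopologicalAddGroup E]
    [ContinuousSMul ℝ E] [LocallyConvexSpace ℝ E] [T2Space E]
    (h : ∀ K : Set E, IsCompact K → IsCompact (closure (convexHull ℝ (balancedHull ℝ K)))) :
    ∀ x : ℕ → E,
      (∃ (B : Set E) (c : ℕ → ℕ → ℝ),
        IsVonNBounded ℝ B ∧ Convex ℝ B ∧ Balanced ℝ B ∧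
        (∀ n m, 0 ≤ c n m) ∧
        Tendsto (fun p : ℕ × ℕ => c p.1 p.2) atTop (𝓝 (0 : ℝ)) ∧
        ∀ n m, x n - x m ∈ c n m • B) →
      ∃ l : E, Tendsto x atTop (𝓝 l) := by
  intro x hx
  obtain ⟨B, c, hB, hBconv, hBbal, hc0, hctend, hmem⟩ := hx
  letI : UniformSpace E := IsTopologicalAddGroup.rightUniformSpace E
  haveI : IsUniformAddGroup E := isUniformAddGroup_of_addCommGroup
  -- the sequence is Cauchy
  choose b hbB hbe using fun n m => hmem n m
  have hswap : Tendsto (fun p : ℕ × ℕ => (p.2, p.1)) atTop atTop := by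
    rw [← prod_atTop_atTop_eq]
    exact tendsto_snd.prodMk tendsto_fst
  have hdiff : Tendsto (fun p : ℕ × ℕ => x p.2 - x p.1) atTop (𝓝 0) := by
    have := hB.smul_tendsto_zero (ε := fun p : ℕ × ℕ => c p.2 p.1)
      (x := fun p : ℕ × ℕ => b p.2 p.1) (l := atTop)
      (Eventually.of_forall fun p => hbB p.2 p.1) (hctend.comp hswap)
    refine this.congr fun p => ?_
    simpa [Pi.smul_apply'] using hbe p.2 p.1
  have hcauchy : CauchySeq x := by
    refine ⟨map_neBot, ?_⟩
    rw [prod_map_map_eq, prod_atTop_atTop_eq, uniformity_eq_comap_nhds_zero E,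
      map_le_iff_le_comap, comap_comap]
    exact tendsto_iff_comap.mp hdiff
  -- extract a fast subsequence
  have hNk : ∀ k : ℕ, ∃ N : ℕ, ∀ n ≥ N, ∀ m ≥ N, c n m < (4:ℝ)⁻¹ ^ k := by
    intro k
    have hev : ∀ᶠ p : ℕ × ℕ in atTop, c p.1 p.2 < (4:ℝ)⁻¹ ^ k :=
      hctend.eventually_lt_const (by positivity)
    obtain ⟨a, ha⟩ := eventually_atTop.1 hev
    exact ⟨max a.1 a.2, fun n hn m hm =>
      ha (n, m) ⟨le_trans (le_max_left _ _) hn, le_trans (le_max_right _ _) hm⟩⟩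
  choose N hN using hNk
  set φ : ℕ → ℕ := fun k => Nat.rec (N 0) (fun k ih => max (N (k + 1)) (ih + 1)) k with hφdef
  have hφsucc : ∀ k, φ (k + 1) = max (N (k + 1)) (φ k + 1) := fun k => rfl
  have hφmono : StrictMono φ := strictMono_nat_of_lt_succ fun k => by
    rw [hφsucc]; exact lt_of_lt_of_le (Nat.lt_succ_self _) (le_max_right _ _)
  have hφN : ∀ k, N k ≤ φ k := by
    intro k
    cases k with
    | zero => exact le_refl _
    | succ k => rw [hφsucc]; exact le_max_left _ _
  have hkey : ∀ k, c (φ (k + 1)) (φ k) < (4:ℝ)⁻¹ ^ k := by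
    intro k
    refine hN k _ ?_ _ (hφN k)
    calc N k ≤ φ k := hφN k
    _ ≤ φ (k + 1) := (hφmono.monotone (Nat.le_succ k))
  -- the normalized differences
  set z : ℕ → E := fun k => (2:ℝ) ^ k • (x (φ (k + 1)) - x (φ k)) with hzdef
  have hz : ∀ k, ∃ w ∈ B, z k = (2:ℝ)⁻¹ ^ k • w := by
    intro k
    have h1 : x (φ (k + 1)) - x (φ k) ∈ ((4:ℝ)⁻¹ ^ k) • B := by
      refine hBbal.smul_mono ?_ (hmem _ _)
      rw [Real.norm_eq_abs, Real.norm_eq_abs, abs_of_nonneg (hc0 _ _),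
        abs_of_nonneg (by positivity)]
      exact (hkey k).le
    obtain ⟨w, hwB, hw⟩ := h1
    refine ⟨w, hwB, ?_⟩
    rw [hzdef]
    simp only [← hw, smul_smul]
    congr 1
    rw [← mul_pow]
    norm_num
  choose w hwB hwz using hz
  have hz0 : Tendsto z atTop (𝓝 0) := by
    have := hB.smul_tendsto_zero (ε := fun k : ℕ => (2:ℝ)⁻¹ ^ k) (x := w) (l := atTop)
      (Eventually.of_forall hwB)
      (tendsto_pow_atTop_nhds_zero_of_lt_one (by norm_num) (by norm_num))
    exact this.congr fun k => by rw [Pi.smul_apply', ← hwz]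
  -- the compact absolutely convex set
  set K : Set E := insert 0 (range z) with hKdef
  have hKcpt : IsCompact K := hz0.isCompact_insert_range
  set A : Set E := convexHull ℝ (balancedHull ℝ K) with hAdef
  have hCcpt : IsCompact (closure A) := h K hKcpt
  have hKA : K ⊆ A := Set.Subset.trans (subset_balancedHull ℝ) (subset_convexHull ℝ _)
  have h0A : (0 : E) ∈ A := hKA (mem_insert _ _)
  have hzA : ∀ k, z k ∈ A := fun k => hKA (mem_insert_of_mem _ (mem_range_self k))
  have hAconv : Convex ℝ A := convex_convexHull ℝ _
  have hgeom : ∀ n : ℕ, ∑ j ∈ Finset.range n, (2:ℝ)⁻¹ ^ (j + 1) = 1 - (2:ℝ)⁻¹ ^ n := by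
    intro n
    induction n with
    | zero => simp
    | succ n ih => rw [Finset.sum_range_succ, ih]; ring
  -- partial sums stay in 2 • closure A
  have hsum : ∀ k, x (φ k) - x (φ 0) ∈ (2:ℝ) • closure A := by
    intro k
    have htel : x (φ k) - x (φ 0) = ∑ j ∈ Finset.range k, (2:ℝ)⁻¹ ^ j • z j := by
      rw [← Finset.sum_range_sub (fun j => x (φ j))]
      refine Finset.sum_congr rfl fun j _ => ?_
      rw [hzdef, smul_smul, ← mul_pow]
      norm_num
    have hne : ∀ j ∈ Finset.range k, j ≠ k := fun j hj => Nat.ne_of_lt (Finset.mem_range.1 hj)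
    have hsum_eq : ∑ j ∈ Finset.range (k + 1),
        (if j = k then (2:ℝ)⁻¹ ^ k else (2:ℝ)⁻¹ ^ (j + 1)) • (if j = k then (0:E) else z j)
        = ∑ j ∈ Finset.range k, (2:ℝ)⁻¹ ^ (j + 1) • z j := by
      rw [Finset.sum_range_succ, if_pos rfl, if_pos rfl, smul_zero, add_zero]
      exact Finset.sum_congr rfl fun j hj => by rw [if_neg (hne j hj), if_neg (hne j hj)]
    have hw_eq : ∑ j ∈ Finset.range (k + 1),
        (if j = k then (2:ℝ)⁻¹ ^ k else (2:ℝ)⁻¹ ^ (j + 1)) = 1 := by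
      rw [Finset.sum_range_succ, if_pos rfl,
        Finset.sum_congr rfl (fun j hj => if_neg (hne j hj)), hgeom k]
      ring
    have hhalf : (2:ℝ)⁻¹ • (x (φ k) - x (φ 0)) ∈ A := by
      rw [htel, Finset.smul_sum]
      have hc2 : ∀ j ∈ Finset.range k,
          (2:ℝ)⁻¹ • ((2:ℝ)⁻¹ ^ j • z j) = (2:ℝ)⁻¹ ^ (j + 1) • z j := by
        intro j _; rw [smul_smul, pow_succ, mul_comm]
      rw [Finset.sum_congr rfl hc2, ← hsum_eq]
      refine hAconv.sum_mem (fun j _ => ?_) hw_eq (fun j _ => ?_)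
      · split_ifs <;> positivity
      · split_ifs
        · exact h0A
        · exact hzA j
    have hdbl : x (φ k) - x (φ 0) = (2:ℝ) • ((2:ℝ)⁻¹ • (x (φ k) - x (φ 0))) := by
      rw [smul_smul]; norm_num
    rw [hdbl]
    exact smul_mem_smul_set (subset_closure hhalf)
  -- conclude
  set T : Set E := (fun v => x (φ 0) + v) '' ((2:ℝ) • closure A) with hTdef
  have hTcpt : IsCompact T := (hCcpt.smul (2:ℝ)).image (continuous_const.add continuous_id)
  have hmemT : ∀ k, (x ∘ φ) k ∈ T := fun k => ⟨x (φ k) - x (φ 0), hsum k, by simp⟩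
  have hsubCauchy : CauchySeq (x ∘ φ) := hcauchy.comp_tendsto hφmono.tendsto_atTop
  obtain ⟨l, _, hl⟩ := cauchySeq_tendsto_of_isComplete hTcpt.isComplete hmemT hsubCauchy
  exact ⟨l, tendsto_nhds_of_cauchySeq_of_subseq hcauchy hφmono.tendsto_atTop hl⟩

/-- Every k-quasi-complete Hausdorff locally convex space over `ℝ` is
Mackey-complete. -/
theorem mackeyComplete_of_kQuasiComplete
    (E : Type*) [AddCommGroup E] [Module ℝ E] [TopologicalSpace E] [IsTopologicalAddGroup E]
    [ContinuousSMul ℝ E] [LocallyConvexSpace ℝ E] [T2Space E]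
    (h : KQuasiComplete E) :
    MackeyComplete E :=
  fun x hx => mackeyComplete_of_kQuasiComplete' E h x hx
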